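/- Every bounded normal operator on a complex Hilbert space with an orthonormal basis of eigenvectors is complex symmetric: there exists a conjugation C such that T = C T* C. (Finite-dimensional version: every normal matrix T on ℂⁿ satisfies T = C T* C for some conjugation C.) -/
import Mathlib

open scoped ComplexConjugate

local notation "⟪" x ", " y "⟫" => @inner ℂ _ _ x y

set_option maxHeartbeats 1000000 in
lemma normal_exists_eigenbasis (n : ℕ)
    (T : EuclideanSpace ℂ (Fin n) →L[ℂ] EuclideanSpace ℂ (Fin n))
    (hnormal : T ∘L ContinuousLinearMap.adjoint T = ContinuousLinearMap.adjoint T ∘L T) :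
    ∃ (b : OrthonormalBasis (Fin n) ℂ (EuclideanSpace ℂ (Fin n))) (lam : Fin n → ℂ),
      (∀ i, T (b i) = lam i • b i) ∧
      (∀ i, ContinuousLinearMap.adjoint T (b i) = conj (lam i) • b i) := by
  classical
  set E := EuclideanSpace ℂ (Fin n)
  set S : E →ₗ[ℂ] E := T.toLinearMap with hS
  set Sd : E →ₗ[ℂ] E := (ContinuousLinearMap.adjoint T).toLinearMap with hSd
  have hn' : S * Sd = Sd * S := by
    apply LinearMap.ext; intro x
    exact congrFun (congrArg DFunLike.coe hnormal) x
  set A : E →ₗ[ℂ] E := S + Sd with hA_def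
  set B : E →ₗ[ℂ] E := Complex.I • (Sd - S) with hB_def
  have hA : A.IsSymmetric := by
    intro x y
    simp only [hA_def, LinearMap.add_apply, inner_add_left, inner_add_right, hS, hSd,
      ContinuousLinearMap.coe_coe, ContinuousLinearMap.adjoint_inner_left,
      ContinuousLinearMap.adjoint_inner_right]
    ring
  have hB : B.IsSymmetric := by
    intro x y
    simp only [hB_def, LinearMap.smul_apply, LinearMap.sub_apply, inner_smul_left,
      inner_smul_right, inner_sub_left, inner_sub_right, hS, hSd,
      ContinuousLinearMap.coe_coe, ContinuousLinearMap.adjoint_inner_left,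
      ContinuousLinearMap.adjoint_inner_right, Complex.conj_I]
    ring
  have hAB : Commute A B := by
    show A * B = B * A
    simp only [hA_def, hB_def, mul_smul_comm, smul_mul_assoc]
    rw [add_mul, mul_sub, mul_sub, mul_add, sub_mul, sub_mul, hn']
  have hInt := hA.directSum_isInternal_of_commute hB hAB
  have hOrth := hA.orthogonalFamily_eigenspace_inf_eigenspace hB
  have hind : iSupIndep (fun i : ℂ × ℂ =>
      (Module.End.eigenspace A i.2 ⊓ Module.End.eigenspace B i.1 : Submodule ℂ E)) :=
    ((DirectSum.isInternal_submodule_iff_iSupIndep_and_iSup_eq_top _).mp hInt).1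
  have hfin : {i : ℂ × ℂ |
      (Module.End.eigenspace A i.2 ⊓ Module.End.eigenspace B i.1 : Submodule ℂ E) ≠ ⊥}.Finite :=
    WellFoundedGT.finite_ne_bot_of_iSupIndep hind
  haveI : Fintype {i : ℂ × ℂ //
      (Module.End.eigenspace A i.2 ⊓ Module.End.eigenspace B i.1 : Submodule ℂ E) ≠ ⊥} :=
    hfin.fintype
  have hInt' : DirectSum.IsInternal (fun i : {i : ℂ × ℂ //
      (Module.End.eigenspace A i.2 ⊓ Module.End.eigenspace B i.1 : Submodule ℂ E) ≠ ⊥} =>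
      (Module.End.eigenspace A i.1.2 ⊓ Module.End.eigenspace B i.1.1 : Submodule ℂ E)) :=
    DirectSum.isInternal_ne_bot_iff.mpr hInt
  have hOrth' := hOrth.comp (Subtype.coe_injective (p := fun i : ℂ × ℂ =>
      (Module.End.eigenspace A i.2 ⊓ Module.End.eigenspace B i.1 : Submodule ℂ E) ≠ ⊥))
  have hrank : Module.finrank ℂ E = n := finrank_euclideanSpace_fin
  set b := hInt'.subordinateOrthonormalBasis hrank hOrth' with hb
  have hmem : ∀ i : Fin n, b i ∈
      (Module.End.eigenspace A (hInt'.subordinateOrthonormalBasisIndex hrank i hOrth').1.2 ⊓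
       Module.End.eigenspace B (hInt'.subordinateOrthonormalBasisIndex hrank i hOrth').1.1 :
        Submodule ℂ E) :=
    fun i => hInt'.subordinateOrthonormalBasis_subordinate hrank i hOrth'
  set ν : Fin n → ℂ := fun i => (hInt'.subordinateOrthonormalBasisIndex hrank i hOrth').1.2 with hν_def
  set μ : Fin n → ℂ := fun i => (hInt'.subordinateOrthonormalBasisIndex hrank i hOrth').1.1 with hμ_def
  have hbne : ∀ i, b i ≠ 0 := fun i => b.orthonormal.ne_zero i
  have hAe : ∀ i, A (b i) = ν i • b i := fun i =>
    Module.End.mem_eigenspace_iff.mp (Submodule.mem_inf.mp (hmem i)).1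
  have hBe : ∀ i, B (b i) = μ i • b i := fun i =>
    Module.End.mem_eigenspace_iff.mp (Submodule.mem_inf.mp (hmem i)).2
  have hν : ∀ i, conj (ν i) = ν i := fun i =>
    hA.conj_eigenvalue_eq_self
      (Module.End.hasEigenvalue_of_hasEigenvector
        ⟨Module.End.mem_eigenspace_iff.mpr (hAe i), hbne i⟩)
  have hμ : ∀ i, conj (μ i) = μ i := fun i =>
    hB.conj_eigenvalue_eq_self
      (Module.End.hasEigenvalue_of_hasEigenvector
        ⟨Module.End.mem_eigenspace_iff.mpr (hBe i), hbne i⟩)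
  refine ⟨b, fun i => (ν i + Complex.I * μ i) / 2, fun i => ?_, fun i => ?_⟩
  · have h2 : (2 : ℂ) • S (b i) = A (b i) + Complex.I • B (b i) := by
      simp only [hA_def, hB_def, LinearMap.add_apply, LinearMap.smul_apply, LinearMap.sub_apply,
        smul_smul, Complex.I_mul_I]
      module
    rw [hAe i, hBe i, smul_smul] at h2
    have hout : S (b i) = ((ν i + Complex.I * μ i) / 2) • b i := by
      have h3 := congrArg (fun x => (2⁻¹ : ℂ) • x) h2
      simp only [smul_smul, smul_add] at h3
      rw [show (2:ℂ)⁻¹ * 2 = 1 by norm_num, one_smul] at h3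
      rw [h3, ← add_smul]
      ring_nf
    simpa [hS] using hout
  · have h2 : (2 : ℂ) • Sd (b i) = A (b i) - Complex.I • B (b i) := by
      simp only [hA_def, hB_def, LinearMap.add_apply, LinearMap.smul_apply, LinearMap.sub_apply,
        smul_smul, Complex.I_mul_I]
      module
    rw [hAe i, hBe i, smul_smul] at h2
    have hout : Sd (b i) = ((ν i - Complex.I * μ i) / 2) • b i := by
      have h3 := congrArg (fun x => (2⁻¹ : ℂ) • x) h2
      simp only [smul_smul, smul_sub] at h3
      rw [show (2:ℂ)⁻¹ * 2 = 1 by norm_num, one_smul] at h3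
      rw [h3, ← sub_smul]
      ring_nf
    have hconj : conj ((ν i + Complex.I * μ i) / 2) = (ν i - Complex.I * μ i) / 2 := by
      rw [map_div₀, map_add, map_mul, Complex.conj_I, hν i, hμ i,
        show (starRingEnd ℂ) (2:ℂ) = 2 from map_ofNat _ 2]
      ring
    rw [hconj]
    simpa [hSd] using hout

theorem normal_is_complex_symmetric (n : ℕ)
    (T : EuclideanSpace ℂ (Fin n) →L[ℂ] EuclideanSpace ℂ (Fin n))
    (hnormal : T ∘L ContinuousLinearMap.adjoint T = ContinuousLinearMap.adjoint T ∘L T) :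
    ∃ C : EuclideanSpace ℂ (Fin n) → EuclideanSpace ℂ (Fin n),
      (∀ f g, C (f + g) = C f + C g) ∧
      (∀ (c : ℂ) (f : EuclideanSpace ℂ (Fin n)), C (c • f) = conj c • C f) ∧
      (∀ f, C (C f) = f) ∧
      (∀ f g, ⟪C f, C g⟫ = ⟪g, f⟫) ∧
      (∀ f, T f = C (ContinuousLinearMap.adjoint T (C f))) := by
  classical
  obtain ⟨b, lam, hT, hTad⟩ := normal_exists_eigenbasis n T hnormal
  set C : EuclideanSpace ℂ (Fin n) → EuclideanSpace ℂ (Fin n) :=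
    fun f => ∑ i, conj ⟪b i, f⟫ • b i with hC
  have hite : ∀ i j : Fin n, ⟪b i, b j⟫ = if i = j then 1 else 0 :=
    fun i j => orthonormal_iff_ite.mp b.orthonormal i j
  have horth : ∀ (d : Fin n → ℂ) (j : Fin n), ⟪b j, ∑ i, d i • b i⟫ = d j := by
    intro d j
    simp [inner_sum, inner_smul_right, hite]
  have hCsum : ∀ (d : Fin n → ℂ), C (∑ i, d i • b i) = ∑ i, conj (d i) • b i := by
    intro d
    simp only [hC, horth]
  refine ⟨C, ?_, ?_, ?_, ?_, ?_⟩
  · intro f g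
    simp only [hC, inner_add_right, map_add, add_smul, Finset.sum_add_distrib]
  · intro c f
    simp only [hC, inner_smul_right, map_mul, mul_smul, Finset.smul_sum]
  · intro f
    rw [hC]
    simp only [horth, Complex.conj_conj]
    exact b.sum_repr' f
  · intro f g
    rw [hC]
    simp only [sum_inner, inner_sum, inner_smul_left, inner_smul_right, hite,
      mul_ite, mul_one, mul_zero, Finset.sum_ite_eq, Finset.sum_ite_eq',
      Finset.mem_univ, if_true, Complex.conj_conj]
    conv_rhs => rw [← b.sum_repr' g]
    rw [sum_inner]
    simp only [inner_smul_left]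
  · intro f
    have h1 : ContinuousLinearMap.adjoint T (C f) =
        ∑ i, (conj ⟪b i, f⟫ * conj (lam i)) • b i := by
      rw [hC, map_sum]
      refine Finset.sum_congr rfl fun i _ => ?_
      rw [map_smul, hTad i, smul_smul]
    rw [h1]
    have h2 : C (∑ i, (conj ⟪b i, f⟫ * conj (lam i)) • b i) =
        ∑ i, (⟪b i, f⟫ * lam i) • b i := by
      rw [hCsum]
      simp only [map_mul, Complex.conj_conj]
    rw [h2]
    conv_lhs => rw [← b.sum_repr' f]
    rw [map_sum]
    refine Finset.sum_congr rfl fun i _ => ?_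
    rw [ContinuousLinearMap.map_smul, hT i, smul_smul]
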